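/- Let n ≥ 2 and let e_n denote the last standard basis vector of ℝ^n. Let ŝ_1, …, ŝ_l ∈ ℝ^n satisfy ⟨ŝ_i, e_n⟩ = 0, let f_1, …, f_l ∈ ℝ, and let c_1, …, c_l > 0 be positive weights. If Σ_{i=1}^{l} c_i f_i = 0 and Σ_{i=1}^{l} c_i f_i (ŝ_i ∧ e_n) = 0, then Σ_{i=1}^{l} c_i f_i ŝ_i = 0 and Σ_{i=1}^{l} c_i (ŝ_i ∧ f_i ŝ_i) = 0; that is, the system of horizontal forces f_i ŝ_i applied at the points ŝ_i is again in equilibrium. -/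

import Mathlib

open Matrix Real
open scoped RealInnerProductSpace

noncomputable section

abbrev Euc (n : ℕ) : Type := EuclideanSpace ℝ (Fin n)

/-- `wedge v w = v wᵀ − w vᵀ`. -/
def wedge {n : ℕ} (v w : Euc n) : Matrix (Fin n) (Fin n) ℝ :=
  Matrix.of fun p q => v p * w q - w p * v q

/-- `rankOne v = v vᵀ`. -/
def rankOne {n : ℕ} (v : Euc n) : Matrix (Fin n) (Fin n) ℝ :=
  Matrix.of fun p q => v p * v q

/-- If the vertical forces `fᵢ eₙ` applied at points `ŝᵢ` of the
hyperplane `{⟪x, eₙ⟫ = 0}` (with positive weights `cᵢ`) are in equilibrium, then so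
are the horizontal forces `fᵢ ŝᵢ` applied at the same points. -/
theorem statement8 {n l : ℕ} (hn : 2 ≤ n)
    (en : Euc n) (hen : en = EuclideanSpace.single (⟨n - 1, by omega⟩ : Fin n) 1)
    (sh : Fin l → Euc n) (hsh : ∀ i, ⟪sh i, en⟫ = 0)
    (f : Fin l → ℝ) (c : Fin l → ℝ) (hc : ∀ i, 0 < c i)
    (h1 : ∑ i, c i * f i = 0)
    (h2 : ∑ i, (c i * f i) • wedge (sh i) en = 0) :
    (∑ i, (c i * f i) • sh i = 0) ∧
    (∑ i, c i • wedge (sh i) (f i • sh i) = 0) := by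
  have hzero : ∀ i, sh i ⟨n - 1, by omega⟩ = 0 := by
    intro i
    have := hsh i
    rw [hen, EuclideanSpace.inner_single_right] at this
    simpa using this
  constructor
  · ext p
    have h2' := congrFun (congrFun h2 p) ⟨n - 1, by omega⟩
    simp only [Matrix.sum_apply, Matrix.smul_apply, wedge, Matrix.of_apply,
      Matrix.zero_apply] at h2'
    rw [hen] at h2'
    simp only [EuclideanSpace.single_apply, hzero] at h2'
    simp only [if_true, mul_one, mul_zero, sub_zero, smul_eq_mul] at h2'
    show (∑ i, (c i * f i) • sh i) p = (0 : ℝ)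
    rw [← h2']
    simp [WithLp.ofLp_sum, Finset.sum_apply]

  · have : ∀ i : Fin l, wedge (sh i) (f i • sh i) = 0 := by
      intro i
      ext p q
      simp [wedge, PiLp.smul_apply]
      ring
    simp [this]

end
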